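/- Let H = ([n_H], E_H) be a graph and G = (A ∪ B, E) the bipartite instance constructed from H as described. Then no popular matching in G matches the vertex a_0 and no popular matching in G matches the vertex b_0. -/
import Mathlib


open scoped Classical

/-- A roommates instance: a (finite) graph `(V, adj)` together with a raw preference
relation: `pref u v w` means vertex `u` strictly prefers its neighbor `v` to its
neighbor `w`. -/
structure RoommatesInstance (V : Type) where
  adj : V → V → Prop
  adj_symm : ∀ u v, adj u v → adj v u
  adj_irrefl : ∀ u, ¬ adj u u
  pref : V → V → V → Prop

namespace RoommatesInstance

variable {V : Type}

/-- The preference relation of each vertex is a strict linear order on its neighbors. -/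
def StrictPrefs (G : RoommatesInstance V) : Prop :=
  (∀ u v w, G.pref u v w → G.adj u v ∧ G.adj u w) ∧
  (∀ u v w x, G.pref u v w → G.pref u w x → G.pref u v x) ∧
  (∀ u v w, G.pref u v w → ¬ G.pref u w v) ∧
  (∀ u v w, G.adj u v → G.adj u w → v ≠ w → G.pref u v w ∨ G.pref u w v)

/-- A matching, encoded by the partner function of the corresponding perfect matching
`M̃` of `G̃` (the graph `G` with a self-loop added at every vertex): `m u = u` means
that `u` is unmatched in `M`, i.e. matched to itself along its self-loop in `M̃`. -/
structure Matching (G : RoommatesInstance V) where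
  m : V → V
  invol : ∀ u, m (m u) = u
  adj_of_ne : ∀ u, m u ≠ u → G.adj u (m u)

variable (G : RoommatesInstance V)

/-- `u` considers `v` strictly better than `w`, where each of `v`, `w` is either a
neighbor of `u` or `u` itself (`u` itself stands for being unmatched, which every
vertex ranks below all of its neighbors). -/
def Better (u v w : V) : Prop :=
  (w = u ∧ v ≠ u) ∨ (v ≠ u ∧ w ≠ u ∧ G.pref u v w)

/-- vertex `u` prefers matching `M` to matching `M'` -/
def Prefers (M M' : G.Matching) (u : V) : Prop :=
  G.Better u (M.m u) (M'.m u)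

/-- `φ(M,M')`: the number of vertices preferring `M` to `M'` -/
noncomputable def phi [Fintype V] (M M' : G.Matching) : ℕ :=
  (Finset.univ.filter fun u => G.Prefers M M' u).card

/-- `Δ(M,M') = φ(M,M') - φ(M',M)` -/
noncomputable def delta [Fintype V] (M M' : G.Matching) : ℤ :=
  (G.phi M M' : ℤ) - (G.phi M' M : ℤ)

/-- a matching `M` is popular if it never loses a head-to-head election -/
def Popular [Fintype V] (M : G.Matching) : Prop :=
  ∀ M' : G.Matching, 0 ≤ G.delta M M'

/-- `(u,v)` is a blocking edge to `M`: both endpoints prefer each other to their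
assignments in `M̃`. -/
def Blocks (M : G.Matching) (u v : V) : Prop :=
  G.adj u v ∧ G.Better u v (M.m u) ∧ G.Better v u (M.m v)

/-- `(u,v)` is a negative edge to `M`: both endpoints prefer their assignments in `M̃`
to each other. -/
def Negative (M : G.Matching) (u v : V) : Prop :=
  G.adj u v ∧ G.Better u (M.m u) v ∧ G.Better v (M.m v) u

/-- `cost_M` on the edges of `G̃`: `cost_M(u,v) = 2` for a blocking edge, `-2` for a
negative edge, `0` otherwise; `cost_M(u,u) = 0` if `u` is unmatched in `M` and `-1`
otherwise. -/
noncomputable def cost (M : G.Matching) (u v : V) : ℤ :=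
  if u = v then (if M.m u = u then 0 else -1)
  else if G.Blocks M u v then 2
  else if G.Negative M u v then -2
  else 0

/-- a stable matching: no blocking edge -/
def Stable (M : G.Matching) : Prop := ∀ u v, ¬ G.Blocks M u v

/-- the number of edges of a matching -/
noncomputable def msize [Fintype V] (M : G.Matching) : ℕ :=
  (Finset.univ.filter fun u => M.m u ≠ u).card / 2

theorem cost_comm (M : G.Matching) (u v : V) : G.cost M u v = G.cost M v u := by
  unfold cost
  rcases eq_or_ne u v with rfl | huv
  · rfl
  · rw [if_neg huv, if_neg (Ne.symm huv)]
    have hb : G.Blocks M u v ↔ G.Blocks M v u :=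
      ⟨fun ⟨h1, h2, h3⟩ => ⟨G.adj_symm _ _ h1, h3, h2⟩,
       fun ⟨h1, h2, h3⟩ => ⟨G.adj_symm _ _ h1, h3, h2⟩⟩
    have hn : G.Negative M u v ↔ G.Negative M v u :=
      ⟨fun ⟨h1, h2, h3⟩ => ⟨G.adj_symm _ _ h1, h3, h2⟩,
       fun ⟨h1, h2, h3⟩ => ⟨G.adj_symm _ _ h1, h3, h2⟩⟩
    simp only [hb, hn]

end RoommatesInstance

/-! ## The bipartite instance `G` constructed from a vertex-cover instance `H` -/

/-- The vertex set of the bipartite instance `G` built from a graph `H` on `Fin n`: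
the two special vertices `a_0, b_0`; the gadget `C_i` on `a_i, a'_i, b_i, b'_i` for
every vertex `i` of `H`; and the gadget `D_e` on `s_e, s'_e, s''_e, t_e, t'_e, t''_e`
for every edge `e = (i,j)` of `H` with `i < j` (encoded as `s i j`, ...; for pairs
`(i,j)` that are not an edge of `H` with `i < j` these vertices are isolated, hence
irrelevant). -/
inductive BV (n : ℕ) where
  | a0 | b0
  | a (i : Fin n) | a' (i : Fin n) | b (i : Fin n) | b' (i : Fin n)
  | s (i j : Fin n) | s' (i j : Fin n) | s'' (i j : Fin n)
  | t (i j : Fin n) | t' (i j : Fin n) | t'' (i j : Fin n)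
  deriving DecidableEq, Fintype

variable {n : ℕ}

/-- The edges of `G` (listed in one direction each).  Writing `e = (i,j)` with
`H.Adj i j` and `i < j`: the gadget `D_e` has edges `s_e t'_e`, `s_e t''_e`,
`s'_e t'_e`, `s'_e t_e`, `s''_e t''_e`, `s''_e t_e`, plus `s_e b_j` and `t_e a_i`;
the gadget `C_i` has edges `a_i b_i`, `a_i b'_i`, `a'_i b_i`, `a'_i b'_i`; and
`a_0` is adjacent to every `b_i`, `b_0` to every `a_i`. -/
def brel (H : SimpleGraph (Fin n)) : BV n → BV n → Prop := fun x y =>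
  (∃ i, x = BV.a0 ∧ y = BV.b i) ∨
  (∃ i, x = BV.b0 ∧ y = BV.a i) ∨
  (∃ i, x = BV.a i ∧ (y = BV.b i ∨ y = BV.b' i)) ∨
  (∃ i, x = BV.a' i ∧ (y = BV.b i ∨ y = BV.b' i)) ∨
  (∃ i j, x = BV.a i ∧ y = BV.t i j ∧ H.Adj i j ∧ i < j) ∨
  (∃ i j, x = BV.b j ∧ y = BV.s i j ∧ H.Adj i j ∧ i < j) ∨
  (∃ i j, x = BV.s i j ∧ (y = BV.t' i j ∨ y = BV.t'' i j) ∧ H.Adj i j ∧ i < j) ∨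
  (∃ i j, x = BV.s' i j ∧ (y = BV.t' i j ∨ y = BV.t i j) ∧ H.Adj i j ∧ i < j) ∨
  (∃ i j, x = BV.s'' i j ∧ (y = BV.t'' i j ∨ y = BV.t i j) ∧ H.Adj i j ∧ i < j)

/-- Ranks encoding the preference lists of `G` (lower rank = more preferred), where
`e = (i,j)` with `i < j`:
`s'_e : t'_e ≻ t_e`;  `s''_e : t''_e ≻ t_e`;  `s_e : t'_e ≻ b_j ≻ t''_e`;
`t'_e : s'_e ≻ s_e`;  `t''_e : s''_e ≻ s_e`;  `t_e : s''_e ≻ a_i ≻ s'_e`;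
`a'_i : b_i ≻ b'_i`;  `b'_i : a_i ≻ a'_i`;
`a_i : b_i ≻ b'_i ≻ b_0 ≻ ⋯ (the t_e's, ordered by the other endpoint of e)`;
`b_i : a_i ≻ a'_i ≻ a_0 ≻ ⋯ (the s_e's, ordered by the other endpoint of e)`;
`a_0` and `b_0` rank their neighbors by index. -/
def brank : BV n → BV n → ℕ := fun x y =>
  match x, y with
  | BV.s' _ _, BV.t' _ _ => 0
  | BV.s' _ _, BV.t _ _ => 1
  | BV.s'' _ _, BV.t'' _ _ => 0
  | BV.s'' _ _, BV.t _ _ => 1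
  | BV.s _ _, BV.t' _ _ => 0
  | BV.s _ _, BV.b _ => 1
  | BV.s _ _, BV.t'' _ _ => 2
  | BV.t' _ _, BV.s' _ _ => 0
  | BV.t' _ _, BV.s _ _ => 1
  | BV.t'' _ _, BV.s'' _ _ => 0
  | BV.t'' _ _, BV.s _ _ => 1
  | BV.t _ _, BV.s'' _ _ => 0
  | BV.t _ _, BV.a _ => 1
  | BV.t _ _, BV.s' _ _ => 2
  | BV.a' _, BV.b _ => 0
  | BV.a' _, BV.b' _ => 1
  | BV.b' _, BV.a _ => 0
  | BV.b' _, BV.a' _ => 1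
  | BV.a _, BV.b _ => 0
  | BV.a _, BV.b' _ => 1
  | BV.a _, BV.b0 => 2
  | BV.a _, BV.t _ j => 3 + j.val
  | BV.b _, BV.a _ => 0
  | BV.b _, BV.a' _ => 1
  | BV.b _, BV.a0 => 2
  | BV.b _, BV.s i _ => 3 + i.val
  | BV.a0, BV.b i => i.val
  | BV.b0, BV.a i => i.val
  | _, _ => 0

/-- The bipartite instance `G = (A ∪ B, E)` constructed from the vertex cover
instance `H`. -/
def BGofH (H : SimpleGraph (Fin n)) : RoommatesInstance (BV n) where
  adj x y := x ≠ y ∧ (brel H x y ∨ brel H y x)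
  adj_symm := fun _ _ h => ⟨h.1.symm, h.2.symm⟩
  adj_irrefl := fun _ h => h.1 rfl
  pref u v w :=
    (u ≠ v ∧ (brel H u v ∨ brel H v u)) ∧ (u ≠ w ∧ (brel H u w ∨ brel H w u)) ∧
      brank u v < brank u w
section Aux
open RoommatesInstance
variable {n : ℕ} {H : SimpleGraph (Fin n)}

lemma adj_a0' {y : BV n} (h : (BGofH H).adj BV.a0 y) : ∃ i, y = BV.b i := by
  obtain ⟨-, h | h⟩ := h <;> simp only [brel] at h <;> aesop

lemma adj_b0' {y : BV n} (h : (BGofH H).adj BV.b0 y) : ∃ i, y = BV.a i := by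
  obtain ⟨-, h | h⟩ := h <;> simp only [brel] at h <;> aesop

lemma adj_a'' {i : Fin n} {y : BV n} (h : (BGofH H).adj (BV.a' i) y) :
    y = BV.b i ∨ y = BV.b' i := by
  obtain ⟨-, h | h⟩ := h <;> simp only [brel] at h <;> aesop

lemma adj_b'' {i : Fin n} {y : BV n} (h : (BGofH H).adj (BV.b' i) y) :
    y = BV.a i ∨ y = BV.a' i := by
  obtain ⟨-, h | h⟩ := h <;> simp only [brel] at h <;> aesop

lemma adj_a1 {i : Fin n} {y : BV n} (h : (BGofH H).adj (BV.a i) y) :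
    y = BV.b i ∨ y = BV.b' i ∨ y = BV.b0 ∨ ∃ j, y = BV.t i j := by
  obtain ⟨-, h | h⟩ := h <;> simp only [brel] at h <;> aesop

lemma adj_b1 {i : Fin n} {y : BV n} (h : (BGofH H).adj (BV.b i) y) :
    y = BV.a i ∨ y = BV.a' i ∨ y = BV.a0 ∨ ∃ j, y = BV.s j i := by
  obtain ⟨-, h | h⟩ := h <;> simp only [brel] at h <;> aesop

lemma adjab (i : Fin n) : (BGofH H).adj (BV.a i) (BV.b i) := ⟨by simp, Or.inl (by simp [brel])⟩
lemma adjab' (i : Fin n) : (BGofH H).adj (BV.a i) (BV.b' i) := ⟨by simp, Or.inl (by simp [brel])⟩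
lemma adja'b (i : Fin n) : (BGofH H).adj (BV.a' i) (BV.b i) := ⟨by simp, Or.inl (by simp [brel])⟩
lemma adja'b' (i : Fin n) : (BGofH H).adj (BV.a' i) (BV.b' i) := ⟨by simp, Or.inl (by simp [brel])⟩
lemma adja0b (i : Fin n) : (BGofH H).adj BV.a0 (BV.b i) := ⟨by simp, Or.inl (by simp [brel])⟩
lemma adjb0a (i : Fin n) : (BGofH H).adj BV.b0 (BV.a i) := ⟨by simp, Or.inl (by simp [brel])⟩

lemma not_better_refl (u v : BV n) : ¬ (BGofH H).Better u v v := by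
  rintro (⟨h1, h2⟩ | ⟨h1, h2, h3⟩)
  · exact h2 h1
  · exact absurd h3.2.2 (lt_irrefl _)

end Aux
open RoommatesInstance in
/-- the cross-matching used to beat a popular matching that matches `a0` to `b i` -/
def crossA {n : ℕ} (M : BV n → BV n) (i : Fin n) : BV n → BV n := fun u =>
  if u = BV.a0 then BV.a0
  else if u = BV.a i then BV.b' i
  else if u = BV.b' i then BV.a i
  else if u = BV.a' i then BV.b i
  else if u = BV.b i then BV.a' i
  else if M u = BV.a i then u
  else M u

section CrossA
variable {n : ℕ} {H : SimpleGraph (Fin n)} (M : BV n → BV n) (i : Fin n)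

lemma crossA_a0 : crossA M i BV.a0 = BV.a0 := by simp [crossA]
lemma crossA_ai : crossA M i (BV.a i) = BV.b' i := by simp [crossA]
lemma crossA_bi' : crossA M i (BV.b' i) = BV.a i := by simp [crossA]
lemma crossA_ai' : crossA M i (BV.a' i) = BV.b i := by simp [crossA]
lemma crossA_bi : crossA M i (BV.b i) = BV.a' i := by simp [crossA]

lemma crossA_ext {u : BV n} (h0 : u ≠ BV.a0) (h1 : u ≠ BV.a i) (h2 : u ≠ BV.b' i)
    (h3 : u ≠ BV.a' i) (h4 : u ≠ BV.b i) (h5 : M u ≠ BV.a i) :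
    crossA M i u = M u := by
  simp [crossA, h0, h1, h2, h3, h4, h5]

lemma crossA_fix {u : BV n} (h0 : u ≠ BV.a0) (h1 : u ≠ BV.a i) (h2 : u ≠ BV.b' i)
    (h3 : u ≠ BV.a' i) (h4 : u ≠ BV.b i) (h5 : M u = BV.a i) :
    crossA M i u = u := by
  simp [crossA, h0, h1, h2, h3, h4, h5]

end CrossA
section Brank
variable {n : ℕ}
lemma brank_a_b (i j : Fin n) : brank (BV.a i) (BV.b j) = 0 := rfl
lemma brank_a_b' (i j : Fin n) : brank (BV.a i) (BV.b' j) = 1 := rfl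
lemma brank_a_b0 (i : Fin n) : brank (BV.a i) BV.b0 = 2 := rfl
lemma brank_a_t (i k j : Fin n) : brank (BV.a i) (BV.t k j) = 3 + j.val := rfl
lemma brank_b_a (i j : Fin n) : brank (BV.b i) (BV.a j) = 0 := rfl
lemma brank_b_a' (i j : Fin n) : brank (BV.b i) (BV.a' j) = 1 := rfl
lemma brank_b_a0 (i : Fin n) : brank (BV.b i) BV.a0 = 2 := rfl
lemma brank_b_s (i j k : Fin n) : brank (BV.b i) (BV.s j k) = 3 + j.val := rfl
lemma brank_a'_b (i j : Fin n) : brank (BV.a' i) (BV.b j) = 0 := rfl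
lemma brank_a'_b' (i j : Fin n) : brank (BV.a' i) (BV.b' j) = 1 := rfl
lemma brank_b'_a (i j : Fin n) : brank (BV.b' i) (BV.a j) = 0 := rfl
lemma brank_b'_a' (i j : Fin n) : brank (BV.b' i) (BV.a' j) = 1 := rfl
end Brank
section Main
open RoommatesInstance
variable {n : ℕ} {H : SimpleGraph (Fin n)}

lemma mkBetter {u v w : BV n} (h1 : (BGofH H).adj u v) (h2 : (BGofH H).adj u w)
    (h3 : brank u v < brank u w) : (BGofH H).Better u v w :=
  Or.inr ⟨fun h => h1.1 h.symm, fun h => h2.1 h.symm, h1, h2, h3⟩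

lemma mkBetterU {u v : BV n} (h : v ≠ u) : (BGofH H).Better u v u := Or.inl ⟨rfl, h⟩

lemma not_pop_a (M : (BGofH H).Matching) (i : Fin n) (hA : M.m BV.a0 = BV.b i) :
    ¬ (BGofH H).Popular M := by
  intro hpop
  have inv := M.invol
  have pe : ∀ u v : BV n, M.m u = v → u = M.m v := fun u v h => by rw [← h, inv]
  have hBi : M.m (BV.b i) = BV.a0 := (pe _ _ hA).symm
  have hAi : M.m (BV.a i) ≠ BV.b i := by
    intro h; have := pe _ _ h; rw [hBi] at this; exact absurd this (by simp)
  have hA'c : M.m (BV.a' i) = BV.b' i ∨ M.m (BV.a' i) = BV.a' i := by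
    by_cases h : M.m (BV.a' i) = BV.a' i
    · exact Or.inr h
    · rcases adj_a'' (M.adj_of_ne _ h) with h' | h'
      · exfalso; have := pe _ _ h'; rw [hBi] at this; exact absurd this (by simp)
      · exact Or.inl h'
  have hB'c : M.m (BV.b' i) = BV.a i ∨ M.m (BV.b' i) = BV.a' i ∨ M.m (BV.b' i) = BV.b' i := by
    by_cases h : M.m (BV.b' i) = BV.b' i
    · exact Or.inr (Or.inr h)
    · rcases adj_b'' (M.adj_of_ne _ h) with h' | h'
      · exact Or.inl h'
      · exact Or.inr (Or.inl h')
  have hAic : M.m (BV.a i) = BV.b' i ∨ M.m (BV.a i) = BV.b0 ∨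
      (∃ j, M.m (BV.a i) = BV.t i j) ∨ M.m (BV.a i) = BV.a i := by
    by_cases h : M.m (BV.a i) = BV.a i
    · exact Or.inr (Or.inr (Or.inr h))
    · rcases adj_a1 (M.adj_of_ne _ h) with h' | h' | h' | h'
      · exact absurd h' hAi
      · exact Or.inl h'
      · exact Or.inr (Or.inl h')
      · exact Or.inr (Or.inr (Or.inl h'))
  -- external vertices: characterize when M.m u is special
  have especA0 : ∀ u : BV n, M.m u = BV.a0 → u = BV.b i := fun u h => by
    rw [pe _ _ h, hA]
  have especBi : ∀ u : BV n, M.m u = BV.b i → u = BV.a0 := fun u h => by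
    rw [pe _ _ h, hBi]
  have especA' : ∀ u : BV n, M.m u = BV.a' i → u = BV.b' i ∨ u = BV.a' i := fun u h => by
    rcases hA'c with h' | h' <;> rw [pe _ _ h, h'] <;> simp
  have especB' : ∀ u : BV n, M.m u = BV.b' i → u = BV.a i ∨ u = BV.a' i ∨ u = BV.b' i :=
    fun u h => by
      rcases hB'c with h' | h' | h' <;> rw [pe _ _ h, h'] <;> simp
  -- the cross matching M'
  have hinv : ∀ u, crossA M.m i (crossA M.m i u) = u := by
    intro u
    by_cases h0 : u = BV.a0; · rw [h0, crossA_a0, crossA_a0]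
    by_cases h1 : u = BV.a i; · rw [h1, crossA_ai, crossA_bi']
    by_cases h2 : u = BV.b' i; · rw [h2, crossA_bi', crossA_ai]
    by_cases h3 : u = BV.a' i; · rw [h3, crossA_ai', crossA_bi]
    by_cases h4 : u = BV.b i; · rw [h4, crossA_bi, crossA_ai']
    by_cases h5 : M.m u = BV.a i
    · rw [crossA_fix M.m i h0 h1 h2 h3 h4 h5, crossA_fix M.m i h0 h1 h2 h3 h4 h5]
    · rw [crossA_ext M.m i h0 h1 h2 h3 h4 h5]
      have m0 : M.m u ≠ BV.a0 := fun h => h4 (especA0 u h)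
      have m4 : M.m u ≠ BV.b i := fun h => h0 (especBi u h)
      have m3 : M.m u ≠ BV.a' i := fun h => (especA' u h).elim h2 h3
      have m2 : M.m u ≠ BV.b' i := fun h => (especB' u h).elim h1 (fun h' => h'.elim h3 h2)
      have m5 : M.m (M.m u) ≠ BV.a i := by rw [inv]; exact h1
      rw [crossA_ext M.m i m0 h5 m2 m3 m4 m5, inv]
  have hadj : ∀ u, crossA M.m i u ≠ u → (BGofH H).adj u (crossA M.m i u) := by
    intro u
    by_cases h0 : u = BV.a0; · rw [h0, crossA_a0]; intro h; exact absurd rfl h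
    by_cases h1 : u = BV.a i; · rw [h1, crossA_ai]; intro _; exact adjab' i
    by_cases h2 : u = BV.b' i
    · rw [h2, crossA_bi']; intro _; exact (BGofH H).adj_symm _ _ (adjab' i)
    by_cases h3 : u = BV.a' i; · rw [h3, crossA_ai']; intro _; exact adja'b i
    by_cases h4 : u = BV.b i
    · rw [h4, crossA_bi]; intro _; exact (BGofH H).adj_symm _ _ (adja'b i)
    by_cases h5 : M.m u = BV.a i
    · rw [crossA_fix M.m i h0 h1 h2 h3 h4 h5]; intro h; exact absurd rfl h
    · rw [crossA_ext M.m i h0 h1 h2 h3 h4 h5]; exact M.adj_of_ne u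
  set M' : (BGofH H).Matching := ⟨crossA M.m i, hinv, hadj⟩ with hM'
  have hM'm : ∀ u, M'.m u = crossA M.m i u := fun u => rfl
  -- upper bound on voters for M
  have hup : ∀ u : BV n, (BGofH H).Prefers M M' u →
      u = BV.a0 ∨ (M.m u = BV.a i ∧ u = M.m (BV.a i)) := by
    intro u hu
    have hp : (BGofH H).Better u (M.m u) (crossA M.m i u) := hu
    by_cases h0 : u = BV.a0; · exact Or.inl h0
    by_cases h1 : u = BV.a i
    · exfalso; subst h1; rw [crossA_ai] at hp
      rcases hAic with h | h | ⟨j, h⟩ | h <;> rw [h] at hp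
      · exact not_better_refl _ _ hp
      · rcases hp with ⟨he, -⟩ | ⟨-, -, -, -, hlt⟩
        · exact absurd he (by simp)
        · rw [brank_a_b0, brank_a_b'] at hlt; omega
      · rcases hp with ⟨he, -⟩ | ⟨-, -, -, -, hlt⟩
        · exact absurd he (by simp)
        · rw [brank_a_t, brank_a_b'] at hlt; omega
      · rcases hp with ⟨-, he⟩ | ⟨he, -⟩ <;> exact he rfl
    by_cases h4 : u = BV.b i
    · exfalso; subst h4; rw [crossA_bi, hBi] at hp
      rcases hp with ⟨he, -⟩ | ⟨-, -, -, -, hlt⟩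
      · exact absurd he (by simp)
      · rw [brank_b_a0, brank_b_a'] at hlt; omega
    by_cases h3 : u = BV.a' i
    · exfalso; subst h3; rw [crossA_ai'] at hp
      rcases hA'c with h | h <;> rw [h] at hp
      · rcases hp with ⟨he, -⟩ | ⟨-, -, -, -, hlt⟩
        · exact absurd he (by simp)
        · rw [brank_a'_b', brank_a'_b] at hlt; omega
      · rcases hp with ⟨he, -⟩ | ⟨he, -⟩
        · exact absurd he (by simp)
        · exact he rfl
    by_cases h2 : u = BV.b' i
    · exfalso; subst h2; rw [crossA_bi'] at hp
      rcases hB'c with h | h | h <;> rw [h] at hp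
      · exact not_better_refl _ _ hp
      · rcases hp with ⟨he, -⟩ | ⟨-, -, -, -, hlt⟩
        · exact absurd he (by simp)
        · rw [brank_b'_a', brank_b'_a] at hlt; omega
      · rcases hp with ⟨he, -⟩ | ⟨he, -⟩
        · exact absurd he (by simp)
        · exact he rfl
    by_cases h5 : M.m u = BV.a i
    · exact Or.inr ⟨h5, pe _ _ h5⟩
    · exfalso; rw [crossA_ext M.m i h0 h1 h2 h3 h4 h5] at hp
      exact not_better_refl _ _ hp
  -- voters for M'
  have vbi : (BGofH H).Prefers M' M (BV.b i) := by
    show (BGofH H).Better _ (crossA M.m i (BV.b i)) (M.m (BV.b i))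
    rw [crossA_bi, hBi]
    exact mkBetter ((BGofH H).adj_symm _ _ (adja'b i)) ((BGofH H).adj_symm _ _ (adja0b i))
      (by rw [brank_b_a', brank_b_a0]; omega)
  have vai' : (BGofH H).Prefers M' M (BV.a' i) := by
    show (BGofH H).Better _ (crossA M.m i (BV.a' i)) (M.m (BV.a' i))
    rw [crossA_ai']
    rcases hA'c with h | h <;> rw [h]
    · exact mkBetter (adja'b i) (adja'b' i) (by rw [brank_a'_b, brank_a'_b']; omega)
    · exact mkBetterU (by simp)
  have hd := hpop M'
  simp only [RoommatesInstance.delta] at hd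
  by_cases hc : M.m (BV.a i) = BV.b' i
  · -- case M(a_i) = b'_i
    have hsub : Finset.univ.filter (fun u => (BGofH H).Prefers M M' u) ⊆ {BV.a0} := by
      intro u hu
      rw [Finset.mem_filter] at hu
      rcases hup u hu.2 with h | ⟨h5, hu2⟩
      · simp [h]
      · exfalso
        rw [hc] at hu2
        subst hu2
        have hp : (BGofH H).Better _ (M.m (BV.b' i)) (crossA M.m i (BV.b' i)) := hu.2
        rw [crossA_bi', h5] at hp
        exact not_better_refl _ _ hp
    have hphi1 : (BGofH H).phi M M' ≤ 1 := by
      unfold RoommatesInstance.phi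
      exact le_trans (Finset.card_le_card hsub) (by simp)
    have hphi2 : 2 ≤ (BGofH H).phi M' M := by
      unfold RoommatesInstance.phi
      have hsub2 : ({BV.b i, BV.a' i} : Finset (BV n)) ⊆
          Finset.univ.filter (fun u => (BGofH H).Prefers M' M u) := by
        intro u hu
        simp only [Finset.mem_insert, Finset.mem_singleton] at hu
        rcases hu with rfl | rfl <;> exact Finset.mem_filter.mpr ⟨Finset.mem_univ _, by assumption⟩
      have hcard : ({BV.b i, BV.a' i} : Finset (BV n)).card = 2 := by
        rw [Finset.card_insert_of_notMem (by simp), Finset.card_singleton]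
      calc 2 = ({BV.b i, BV.a' i} : Finset (BV n)).card := hcard.symm
        _ ≤ _ := Finset.card_le_card hsub2
    omega
  · -- case M(a_i) ≠ b'_i
    have vai : (BGofH H).Prefers M' M (BV.a i) := by
      show (BGofH H).Better _ (crossA M.m i (BV.a i)) (M.m (BV.a i))
      rw [crossA_ai]
      rcases hAic with h | h | ⟨j, h⟩ | h
      · exact absurd h hc
      · rw [h]
        exact mkBetter (adjab' i) ((BGofH H).adj_symm _ _ (adjb0a i))
          (by rw [brank_a_b', brank_a_b0]; omega)
      · have hadj' := M.adj_of_ne (BV.a i) (by rw [h]; simp)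
        rw [h] at hadj' ⊢
        exact mkBetter (adjab' i) hadj' (by rw [brank_a_b', brank_a_t]; omega)
      · rw [h]; exact mkBetterU (by simp)
    have hsub : Finset.univ.filter (fun u => (BGofH H).Prefers M M' u) ⊆
        {BV.a0, M.m (BV.a i)} := by
      intro u hu
      rw [Finset.mem_filter] at hu
      rcases hup u hu.2 with h | ⟨-, hu2⟩
      · simp [h]
      · simp [hu2]
    have hphi1 : (BGofH H).phi M M' ≤ 2 := by
      unfold RoommatesInstance.phi
      exact le_trans (Finset.card_le_card hsub)
        (le_trans (Finset.card_insert_le _ _) (by simp))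
    have hphi2 : 3 ≤ (BGofH H).phi M' M := by
      unfold RoommatesInstance.phi
      have hsub2 : ({BV.a i, BV.b i, BV.a' i} : Finset (BV n)) ⊆
          Finset.univ.filter (fun u => (BGofH H).Prefers M' M u) := by
        intro u hu
        simp only [Finset.mem_insert, Finset.mem_singleton] at hu
        rcases hu with rfl | rfl | rfl <;>
          exact Finset.mem_filter.mpr ⟨Finset.mem_univ _, by assumption⟩
      have hcard : ({BV.a i, BV.b i, BV.a' i} : Finset (BV n)).card = 3 := by
        rw [Finset.card_insert_of_notMem (by simp), Finset.card_insert_of_notMem (by simp),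
          Finset.card_singleton]
      calc 3 = ({BV.a i, BV.b i, BV.a' i} : Finset (BV n)).card := hcard.symm
        _ ≤ _ := Finset.card_le_card hsub2
    omega

end Main
def crossB {n : ℕ} (M : BV n → BV n) (i : Fin n) : BV n → BV n := fun u =>
  if u = BV.b0 then BV.b0
  else if u = BV.b i then BV.a' i
  else if u = BV.a' i then BV.b i
  else if u = BV.a i then BV.b' i
  else if u = BV.b' i then BV.a i
  else if M u = BV.b i then u
  else M u

section CrossB
variable {n : ℕ} {H : SimpleGraph (Fin n)} (M : BV n → BV n) (i : Fin n)

lemma crossB_b0 : crossB M i BV.b0 = BV.b0 := by simp [crossB]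
lemma crossB_bi : crossB M i (BV.b i) = BV.a' i := by simp [crossB]
lemma crossB_ai' : crossB M i (BV.a' i) = BV.b i := by simp [crossB]
lemma crossB_ai : crossB M i (BV.a i) = BV.b' i := by simp [crossB]
lemma crossB_bi' : crossB M i (BV.b' i) = BV.a i := by simp [crossB]

lemma crossB_ext {u : BV n} (h0 : u ≠ BV.b0) (h1 : u ≠ BV.b i) (h2 : u ≠ BV.a' i)
    (h3 : u ≠ BV.a i) (h4 : u ≠ BV.b' i) (h5 : M u ≠ BV.b i) :
    crossB M i u = M u := by
  simp [crossB, h0, h1, h2, h3, h4, h5]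

lemma crossB_fix {u : BV n} (h0 : u ≠ BV.b0) (h1 : u ≠ BV.b i) (h2 : u ≠ BV.a' i)
    (h3 : u ≠ BV.a i) (h4 : u ≠ BV.b' i) (h5 : M u = BV.b i) :
    crossB M i u = u := by
  simp [crossB, h0, h1, h2, h3, h4, h5]

end CrossB

section MainB
open RoommatesInstance
variable {n : ℕ} {H : SimpleGraph (Fin n)}

lemma not_pop_b (M : (BGofH H).Matching) (i : Fin n) (hA : M.m BV.b0 = BV.a i) :
    ¬ (BGofH H).Popular M := by
  intro hpop
  have inv := M.invol
  have pe : ∀ u v : BV n, M.m u = v → u = M.m v := fun u v h => by rw [← h, inv]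
  have hAi : M.m (BV.a i) = BV.b0 := (pe _ _ hA).symm
  have hBiA : M.m (BV.b i) ≠ BV.a i := by
    intro h; have := pe _ _ h; rw [hAi] at this; exact absurd this (by simp)
  have hB'c : M.m (BV.b' i) = BV.a' i ∨ M.m (BV.b' i) = BV.b' i := by
    by_cases h : M.m (BV.b' i) = BV.b' i
    · exact Or.inr h
    · rcases adj_b'' (M.adj_of_ne _ h) with h' | h'
      · exfalso; have := pe _ _ h'; rw [hAi] at this; exact absurd this (by simp)
      · exact Or.inl h'
  have hA'c : M.m (BV.a' i) = BV.b i ∨ M.m (BV.a' i) = BV.b' i ∨ M.m (BV.a' i) = BV.a' i := by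
    by_cases h : M.m (BV.a' i) = BV.a' i
    · exact Or.inr (Or.inr h)
    · rcases adj_a'' (M.adj_of_ne _ h) with h' | h'
      · exact Or.inl h'
      · exact Or.inr (Or.inl h')
  have hBic : M.m (BV.b i) = BV.a' i ∨ M.m (BV.b i) = BV.a0 ∨
      (∃ j, M.m (BV.b i) = BV.s j i) ∨ M.m (BV.b i) = BV.b i := by
    by_cases h : M.m (BV.b i) = BV.b i
    · exact Or.inr (Or.inr (Or.inr h))
    · rcases adj_b1 (M.adj_of_ne _ h) with h' | h' | h' | h'
      · exact absurd h' hBiA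
      · exact Or.inl h'
      · exact Or.inr (Or.inl h')
      · exact Or.inr (Or.inr (Or.inl h'))
  have especB0 : ∀ u : BV n, M.m u = BV.b0 → u = BV.a i := fun u h => by
    rw [pe _ _ h, hA]
  have especAi : ∀ u : BV n, M.m u = BV.a i → u = BV.b0 := fun u h => by
    rw [pe _ _ h, hAi]
  have especB' : ∀ u : BV n, M.m u = BV.b' i → u = BV.a' i ∨ u = BV.b' i := fun u h => by
    rcases hB'c with h' | h' <;> rw [pe _ _ h, h'] <;> simp
  have especA' : ∀ u : BV n, M.m u = BV.a' i → u = BV.b i ∨ u = BV.b' i ∨ u = BV.a' i :=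
    fun u h => by
      rcases hA'c with h' | h' | h' <;> rw [pe _ _ h, h'] <;> simp
  have hinv : ∀ u, crossB M.m i (crossB M.m i u) = u := by
    intro u
    by_cases h0 : u = BV.b0; · rw [h0, crossB_b0, crossB_b0]
    by_cases h1 : u = BV.b i; · rw [h1, crossB_bi, crossB_ai']
    by_cases h2 : u = BV.a' i; · rw [h2, crossB_ai', crossB_bi]
    by_cases h3 : u = BV.a i; · rw [h3, crossB_ai, crossB_bi']
    by_cases h4 : u = BV.b' i; · rw [h4, crossB_bi', crossB_ai]
    by_cases h5 : M.m u = BV.b i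
    · rw [crossB_fix M.m i h0 h1 h2 h3 h4 h5, crossB_fix M.m i h0 h1 h2 h3 h4 h5]
    · rw [crossB_ext M.m i h0 h1 h2 h3 h4 h5]
      have m0 : M.m u ≠ BV.b0 := fun h => h3 (especB0 u h)
      have m3 : M.m u ≠ BV.a i := fun h => h0 (especAi u h)
      have m4 : M.m u ≠ BV.b' i := fun h => (especB' u h).elim h2 h4
      have m2 : M.m u ≠ BV.a' i := fun h => (especA' u h).elim h1 (fun h' => h'.elim h4 h2)
      have m5 : M.m (M.m u) ≠ BV.b i := by rw [inv]; exact h1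
      rw [crossB_ext M.m i m0 h5 m2 m3 m4 m5, inv]
  have hadj : ∀ u, crossB M.m i u ≠ u → (BGofH H).adj u (crossB M.m i u) := by
    intro u
    by_cases h0 : u = BV.b0; · rw [h0, crossB_b0]; intro h; exact absurd rfl h
    by_cases h1 : u = BV.b i
    · rw [h1, crossB_bi]; intro _; exact (BGofH H).adj_symm _ _ (adja'b i)
    by_cases h2 : u = BV.a' i; · rw [h2, crossB_ai']; intro _; exact adja'b i
    by_cases h3 : u = BV.a i; · rw [h3, crossB_ai]; intro _; exact adjab' i
    by_cases h4 : u = BV.b' i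
    · rw [h4, crossB_bi']; intro _; exact (BGofH H).adj_symm _ _ (adjab' i)
    by_cases h5 : M.m u = BV.b i
    · rw [crossB_fix M.m i h0 h1 h2 h3 h4 h5]; intro h; exact absurd rfl h
    · rw [crossB_ext M.m i h0 h1 h2 h3 h4 h5]; exact M.adj_of_ne u
  set M' : (BGofH H).Matching := ⟨crossB M.m i, hinv, hadj⟩ with hM'
  have hup : ∀ u : BV n, (BGofH H).Prefers M M' u →
      u = BV.b0 ∨ (M.m u = BV.b i ∧ u = M.m (BV.b i)) := by
    intro u hu
    have hp : (BGofH H).Better u (M.m u) (crossB M.m i u) := hu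
    by_cases h0 : u = BV.b0; · exact Or.inl h0
    by_cases h1 : u = BV.b i
    · exfalso; subst h1; rw [crossB_bi] at hp
      rcases hBic with h | h | ⟨j, h⟩ | h <;> rw [h] at hp
      · exact not_better_refl _ _ hp
      · rcases hp with ⟨he, -⟩ | ⟨-, -, -, -, hlt⟩
        · exact absurd he (by simp)
        · rw [brank_b_a0, brank_b_a'] at hlt; omega
      · rcases hp with ⟨he, -⟩ | ⟨-, -, -, -, hlt⟩
        · exact absurd he (by simp)
        · rw [brank_b_s, brank_b_a'] at hlt; omega
      · rcases hp with ⟨-, he⟩ | ⟨he, -⟩ <;> exact he rfl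
    by_cases h3 : u = BV.a i
    · exfalso; subst h3; rw [crossB_ai, hAi] at hp
      rcases hp with ⟨he, -⟩ | ⟨-, -, -, -, hlt⟩
      · exact absurd he (by simp)
      · rw [brank_a_b0, brank_a_b'] at hlt; omega
    by_cases h2 : u = BV.b' i
    · exfalso; subst h2; rw [crossB_bi'] at hp
      rcases hB'c with h | h <;> rw [h] at hp
      · rcases hp with ⟨he, -⟩ | ⟨-, -, -, -, hlt⟩
        · exact absurd he (by simp)
        · rw [brank_b'_a', brank_b'_a] at hlt; omega
      · rcases hp with ⟨he, -⟩ | ⟨he, -⟩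
        · exact absurd he (by simp)
        · exact he rfl
    by_cases h4 : u = BV.a' i
    · exfalso; subst h4; rw [crossB_ai'] at hp
      rcases hA'c with h | h | h <;> rw [h] at hp
      · exact not_better_refl _ _ hp
      · rcases hp with ⟨he, -⟩ | ⟨-, -, -, -, hlt⟩
        · exact absurd he (by simp)
        · rw [brank_a'_b', brank_a'_b] at hlt; omega
      · rcases hp with ⟨he, -⟩ | ⟨he, -⟩
        · exact absurd he (by simp)
        · exact he rfl
    by_cases h5 : M.m u = BV.b i
    · exact Or.inr ⟨h5, pe _ _ h5⟩
    · exfalso; rw [crossB_ext M.m i h0 h1 h4 h3 h2 h5] at hp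
      exact not_better_refl _ _ hp
  have vai : (BGofH H).Prefers M' M (BV.a i) := by
    show (BGofH H).Better _ (crossB M.m i (BV.a i)) (M.m (BV.a i))
    rw [crossB_ai, hAi]
    exact mkBetter (adjab' i) ((BGofH H).adj_symm _ _ (adjb0a i))
      (by rw [brank_a_b', brank_a_b0]; omega)
  have vbi' : (BGofH H).Prefers M' M (BV.b' i) := by
    show (BGofH H).Better _ (crossB M.m i (BV.b' i)) (M.m (BV.b' i))
    rw [crossB_bi']
    rcases hB'c with h | h <;> rw [h]
    · exact mkBetter ((BGofH H).adj_symm _ _ (adjab' i)) ((BGofH H).adj_symm _ _ (adja'b' i))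
        (by rw [brank_b'_a, brank_b'_a']; omega)
    · exact mkBetterU (by simp)
  have hd := hpop M'
  simp only [RoommatesInstance.delta] at hd
  by_cases hc : M.m (BV.b i) = BV.a' i
  · have hsub : Finset.univ.filter (fun u => (BGofH H).Prefers M M' u) ⊆ {BV.b0} := by
      intro u hu
      rw [Finset.mem_filter] at hu
      rcases hup u hu.2 with h | ⟨h5, hu2⟩
      · simp [h]
      · exfalso
        rw [hc] at hu2
        subst hu2
        have hp : (BGofH H).Better _ (M.m (BV.a' i)) (crossB M.m i (BV.a' i)) := hu.2
        rw [crossB_ai', h5] at hp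
        exact not_better_refl _ _ hp
    have hphi1 : (BGofH H).phi M M' ≤ 1 := by
      unfold RoommatesInstance.phi
      exact le_trans (Finset.card_le_card hsub) (by simp)
    have hphi2 : 2 ≤ (BGofH H).phi M' M := by
      unfold RoommatesInstance.phi
      have hsub2 : ({BV.a i, BV.b' i} : Finset (BV n)) ⊆
          Finset.univ.filter (fun u => (BGofH H).Prefers M' M u) := by
        intro u hu
        simp only [Finset.mem_insert, Finset.mem_singleton] at hu
        rcases hu with rfl | rfl <;> exact Finset.mem_filter.mpr ⟨Finset.mem_univ _, by assumption⟩
      have hcard : ({BV.a i, BV.b' i} : Finset (BV n)).card = 2 := by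
        rw [Finset.card_insert_of_notMem (by simp), Finset.card_singleton]
      calc 2 = ({BV.a i, BV.b' i} : Finset (BV n)).card := hcard.symm
        _ ≤ _ := Finset.card_le_card hsub2
    omega
  · have vbi : (BGofH H).Prefers M' M (BV.b i) := by
      show (BGofH H).Better _ (crossB M.m i (BV.b i)) (M.m (BV.b i))
      rw [crossB_bi]
      rcases hBic with h | h | ⟨j, h⟩ | h
      · exact absurd h hc
      · rw [h]
        exact mkBetter ((BGofH H).adj_symm _ _ (adja'b i)) ((BGofH H).adj_symm _ _ (adja0b i))
          (by rw [brank_b_a', brank_b_a0]; omega)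
      · have hadj' := M.adj_of_ne (BV.b i) (by rw [h]; simp)
        rw [h] at hadj' ⊢
        exact mkBetter ((BGofH H).adj_symm _ _ (adja'b i)) hadj'
          (by rw [brank_b_a', brank_b_s]; omega)
      · rw [h]; exact mkBetterU (by simp)
    have va'i : (BGofH H).Prefers M' M (BV.a' i) := by
      show (BGofH H).Better _ (crossB M.m i (BV.a' i)) (M.m (BV.a' i))
      rw [crossB_ai']
      rcases hA'c with h | h | h
      · exact absurd (pe _ _ h).symm hc
      · rw [h]
        exact mkBetter (adja'b i) (adja'b' i) (by rw [brank_a'_b, brank_a'_b']; omega)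
      · rw [h]; exact mkBetterU (by simp)
    have hsub : Finset.univ.filter (fun u => (BGofH H).Prefers M M' u) ⊆
        {BV.b0, M.m (BV.b i)} := by
      intro u hu
      rw [Finset.mem_filter] at hu
      rcases hup u hu.2 with h | ⟨-, hu2⟩
      · simp [h]
      · simp [hu2]
    have hphi1 : (BGofH H).phi M M' ≤ 2 := by
      unfold RoommatesInstance.phi
      exact le_trans (Finset.card_le_card hsub)
        (le_trans (Finset.card_insert_le _ _) (by simp))
    have hphi2 : 3 ≤ (BGofH H).phi M' M := by
      unfold RoommatesInstance.phi
      have hsub2 : ({BV.b i, BV.a i, BV.a' i} : Finset (BV n)) ⊆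
          Finset.univ.filter (fun u => (BGofH H).Prefers M' M u) := by
        intro u hu
        simp only [Finset.mem_insert, Finset.mem_singleton] at hu
        rcases hu with rfl | rfl | rfl <;>
          exact Finset.mem_filter.mpr ⟨Finset.mem_univ _, by assumption⟩
      have hcard : ({BV.b i, BV.a i, BV.a' i} : Finset (BV n)).card = 3 := by
        rw [Finset.card_insert_of_notMem (by simp), Finset.card_insert_of_notMem (by simp),
          Finset.card_singleton]
      calc 3 = ({BV.b i, BV.a i, BV.a' i} : Finset (BV n)).card := hcard.symm
        _ ≤ _ := Finset.card_le_card hsub2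
    omega

end MainB
open RoommatesInstance in
/-- No popular matching in `G` matches `a_0`, and no popular
matching in `G` matches `b_0`. -/
theorem popular_leaves_a0_b0_unmatched {n : ℕ} (H : SimpleGraph (Fin n))
    (M : (BGofH H).Matching) (hM : (BGofH H).Popular M) :
    M.m BV.a0 = BV.a0 ∧ M.m BV.b0 = BV.b0 := by
  constructor
  · by_contra h0
    obtain ⟨i, hi⟩ := adj_a0' (M.adj_of_ne _ h0)
    exact not_pop_a M i hi hM
  · by_contra h0
    obtain ⟨i, hi⟩ := adj_b0' (M.adj_of_ne _ h0)
    exact not_pop_b M i hi hM
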